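/- For every $m\ge 1$ and $k\ge 3$, the homomorphism $\psi_m\colon B_k\to S_{mk}$ with $\psi_m(\sigma_i)=(a^i_0,a^{i+1}_0,a^i_1,a^{i+1}_1,\ldots,a^i_{m-1},a^{i+1}_{m-1})$ is non-cyclic and its image acts transitively on $\{1,\ldots,mk\}$. -/

import Mathlib

/-- For `m ≥ 1` and `k ≥ 3`, the homomorphism `ψ_m : B_k → S_{mk}` with
`ψ_m(σ_i) = (a^i_0, a^{i+1}_0, …, a^i_{m-1}, a^{i+1}_{m-1})` (encoded by the defining
formula of the images `s i` of the generators) is non-cyclic and its image acts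
transitively on `{1,…,mk}`. -/
theorem psi_m_noncyclic_transitive (m k : ℕ) (hm : 1 ≤ m) (hk : 3 ≤ k)
    (s : ℕ → Equiv.Perm ℕ)
    (hs : ∀ i, 1 ≤ i → i ≤ k - 1 →
      (∀ q, q < m →
        s i (1 + m * (i - 1) + q) = 1 + m * i + q ∧
        s i (1 + m * i + q) = 1 + m * (i - 1) + (q + 1) % m) ∧
      (∀ x, (∀ q, q < m → x ≠ 1 + m * (i - 1) + q ∧ x ≠ 1 + m * i + q) → s i x = x)) :
    ¬ IsCyclic ↥(Subgroup.closure {g : Equiv.Perm ℕ | ∃ i, 1 ≤ i ∧ i ≤ k - 1 ∧ g = s i}) ∧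
    (∀ x y, 1 ≤ x → x ≤ m * k → 1 ≤ y → y ≤ m * k →
      ∃ g ∈ Subgroup.closure {g : Equiv.Perm ℕ | ∃ i, 1 ≤ i ∧ i ≤ k - 1 ∧ g = s i},
        g x = y) := by
  set S : Set (Equiv.Perm ℕ) := {g : Equiv.Perm ℕ | ∃ i, 1 ≤ i ∧ i ≤ k - 1 ∧ g = s i} with hS
  have hs1mem : s 1 ∈ Subgroup.closure S :=
    Subgroup.subset_closure ⟨1, le_rfl, by omega, rfl⟩
  have hs2mem : s 2 ∈ Subgroup.closure S :=
    Subgroup.subset_closure ⟨2, by omega, by omega, rfl⟩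
  have h1 := hs 1 le_rfl (by omega)
  have h2 := hs 2 (by omega) (by omega)
  -- the two generators do not commute:
  have hnc : s 1 * s 2 ≠ s 2 * s 1 := by
    intro hcomm
    have e1 : s 2 (1 + m) = 1 + 2 * m := by
      have := (h2.1 0 (by omega)).1
      have e : 1 + m * (2 - 1) + 0 = 1 + m := by omega
      rw [e] at this; rw [this]; ring
    have e2 : s 1 (1 + 2 * m) = 1 + 2 * m := by
      apply h1.2
      intro q hq
      omega
    have e3 : s 1 (1 + m) = 1 + 1 % m := by
      have := (h1.1 0 (by omega)).2
      have e : 1 + m * 1 + 0 = 1 + m := by omega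
      rw [e] at this; rw [this]
      simp
    have e4 : s 2 (1 + 1 % m) = 1 + 1 % m := by
      apply h2.2
      intro q hq
      have : 1 % m < m := Nat.mod_lt _ (by omega)
      omega
    have := DFunLike.congr_fun hcomm (1 + m)
    simp only [Equiv.Perm.mul_apply] at this
    rw [e1, e2, e3, e4] at this
    have hm1 : 1 % m < m := Nat.mod_lt _ (by omega)
    omega
  constructor
  · intro hcyc
    obtain ⟨g, hg⟩ := hcyc.exists_generator
    obtain ⟨a, ha⟩ := Subgroup.mem_zpowers_iff.mp (hg ⟨s 1, hs1mem⟩)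
    obtain ⟨b, hb⟩ := Subgroup.mem_zpowers_iff.mp (hg ⟨s 2, hs2mem⟩)
    apply hnc
    have : (⟨s 1, hs1mem⟩ * ⟨s 2, hs2mem⟩ :
        ↥(Subgroup.closure S)) = ⟨s 2, hs2mem⟩ * ⟨s 1, hs1mem⟩ := by
      rw [← ha, ← hb, ← zpow_add, ← zpow_add, add_comm]
    exact congrArg Subtype.val this
  · -- transitivity
    have key : ∀ i, i < k → ∀ q, q < m →
        ∃ g ∈ Subgroup.closure S, g 1 = 1 + m * i + q := by
      intro i
      induction i with
      | zero =>
        intro _ q hq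
        induction q with
        | zero => exact ⟨1, one_mem _, by simp⟩
        | succ q ih =>
          obtain ⟨g, hg, hg1⟩ := ih (by omega)
          refine ⟨s 1 * (s 1 * g), mul_mem hs1mem (mul_mem hs1mem hg), ?_⟩
          have hmov := h1.1 q (by omega)
          have ea : s 1 (1 + m * 0 + q) = 1 + m * 1 + q := by
            have := hmov.1; simpa using this
          have eb : s 1 (1 + m * 1 + q) = 1 + m * 0 + (q + 1) := by
            have := hmov.2
            have : s 1 (1 + m * 1 + q) = 1 + m * (1 - 1) + (q + 1) % m := this
            rw [this]
            have : (q + 1) % m = q + 1 := Nat.mod_eq_of_lt (by omega)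
            omega
          simp only [Equiv.Perm.mul_apply, hg1, ea, eb]
      | succ i ih =>
        intro hik q hq
        obtain ⟨g, hg, hg1⟩ := ih (by omega) q hq
        have hmem : s (i + 1) ∈ Subgroup.closure S :=
          Subgroup.subset_closure ⟨i + 1, by omega, by omega, rfl⟩
        refine ⟨s (i + 1) * g, mul_mem hmem hg, ?_⟩
        have hmov := ((hs (i + 1) (by omega) (by omega)).1 q hq).1
        simp only [Nat.add_sub_cancel] at hmov
        simp only [Equiv.Perm.mul_apply, hg1, hmov]
    have reach : ∀ x, 1 ≤ x → x ≤ m * k →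
        ∃ g ∈ Subgroup.closure S, g 1 = x := by
      intro x hx1 hxk
      have hd : (x - 1) / m < k := by
        rw [Nat.div_lt_iff_lt_mul (by omega), Nat.mul_comm k m]
        omega
      have hmm : (x - 1) % m < m := Nat.mod_lt _ (by omega)
      obtain ⟨g, hg, hg1⟩ := key _ hd _ hmm
      have := Nat.div_add_mod (x - 1) m
      refine ⟨g, hg, ?_⟩
      rw [hg1]
      omega
    intro x y hx1 hxk hy1 hyk
    obtain ⟨g1, hg1m, hg1⟩ := reach x hx1 hxk
    obtain ⟨g2, hg2m, hg2⟩ := reach y hy1 hyk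
    refine ⟨g2 * g1⁻¹, mul_mem hg2m (inv_mem hg1m), ?_⟩
    rw [Equiv.Perm.mul_apply, ← hg1, Equiv.Perm.inv_def, Equiv.symm_apply_apply, hg2]
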